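/- Let A, B be finite nonempty sets of integers, and suppose the interval [a,b] ⊆ A + B where a = min(A+B) and some b. Let M = max A, N = max B. Then (A ∪ [a, b-N]) + (B ∪ [a, b-M]) = A + B. -/
import Mathlib


open scoped Pointwise

theorem stmt18 (A B : Finset ℤ) (hA : A.Nonempty) (hB : B.Nonempty) (M N a b : ℤ)
    (hminA : A.min' hA = 0) (hminB : B.min' hB = 0)
    (hmaxA : A.max' hA = M) (hmaxB : B.max' hB = N) (hMN : N ≤ M)
    (ha : a = (A + B).min' (hA.add hB))
    (hb : N + a ≤ b)
    (hJ : Finset.Icc a b ⊆ A + B) :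
    (A ∪ Finset.Icc a (b - N)) + (B ∪ Finset.Icc a (b - M)) = A + B := by
  have h0A : (0:ℤ) ∈ A := hminA ▸ A.min'_mem hA
  have h0B : (0:ℤ) ∈ B := hminB ▸ B.min'_mem hB
  have hMmem : M ∈ A := hmaxA ▸ A.max'_mem hA
  have hNmem : N ∈ B := hmaxB ▸ B.max'_mem hB
  have hAge : ∀ x ∈ A, 0 ≤ x := fun x hx => hminA ▸ A.min'_le x hx
  have hBge : ∀ x ∈ B, 0 ≤ x := fun x hx => hminB ▸ B.min'_le x hx
  have hAle : ∀ x ∈ A, x ≤ M := fun x hx => hmaxA ▸ A.le_max' x hx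
  have hBle : ∀ x ∈ B, x ≤ N := fun x hx => hmaxB ▸ B.le_max' x hx
  have ha0 : a = 0 := by
    rw [ha]
    apply le_antisymm
    · have := Finset.min'_le (A + B) (0 + 0) (Finset.add_mem_add h0A h0B)
      simpa using this
    · apply Finset.le_min'
      intro y hy
      obtain ⟨u, hu, v, hv, rfl⟩ := Finset.mem_add.mp hy
      exact add_nonneg (hAge u hu) (hBge v hv)
  subst ha0
  have hN0 : 0 ≤ N := hBge N hNmem
  have hM0 : 0 ≤ M := hAge M hMmem
  have hab : (0:ℤ) ≤ b := by linarith
  have hbmem : b ∈ A + B := hJ (Finset.mem_Icc.mpr ⟨hab, le_refl b⟩)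
  have hbMN : b ≤ M + N := by
    obtain ⟨u, hu, v, hv, huv⟩ := Finset.mem_add.mp hbmem
    have h1 := hAle u hu
    have h2 := hBle v hv
    linarith
  apply subset_antisymm
  · intro x hx
    obtain ⟨u, hu, v, hv, rfl⟩ := Finset.mem_add.mp hx
    rcases Finset.mem_union.mp hu with hu | hu <;>
      rcases Finset.mem_union.mp hv with hv | hv
    · exact Finset.add_mem_add hu hv
    · rw [Finset.mem_Icc] at hv
      apply hJ
      rw [Finset.mem_Icc]
      constructor
      · have := hAge u hu; linarith
      · have := hAle u hu; linarith
    · rw [Finset.mem_Icc] at hu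
      apply hJ
      rw [Finset.mem_Icc]
      constructor
      · have := hBge v hv; linarith
      · have := hBle v hv; linarith
    · rw [Finset.mem_Icc] at hu hv
      apply hJ
      rw [Finset.mem_Icc]
      constructor
      · linarith
      · linarith
  · intro x hx
    obtain ⟨u, hu, v, hv, rfl⟩ := Finset.mem_add.mp hx
    exact Finset.add_mem_add (Finset.mem_union_left _ hu) (Finset.mem_union_left _ hv)
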